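/- Let M be a connected matroid of rank 3 on a finite ground set E, and let A ⊆ E be a flat of M with r(A) = 1. Then the restriction M|A and the contraction M/A are both connected (i.e., (A,1)_≤ is a facet-defining inequality of the base system of M) if and only if there exists no pair of flats F1, F2 of M with r(F1) = r(F2) = 2, A = F1 ∩ F2 and F1 ∪ F2 = E. -/

import Mathlib

open Set Matroid

namespace PaperWMO

variable {α : Type*}

/-- The rank of a set `X` in a matroid `M`: the size of a largest independent subset of `X`. -/
noncomputable def rk (M : Matroid α) (X : Set α) : ℕ :=
  sSup {n : ℕ | ∃ I, M.Indep I ∧ I ⊆ X ∧ I.ncard = n}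

/-- Contraction of the set `C` in the matroid `M`, defined by duality:
`M / C = (M✶ \ C)✶`, where deletion is restriction to the complement. -/
noncomputable def contract (M : Matroid α) (C : Set α) : Matroid α :=
  (M✶ ↾ (M.E \ C))✶

/-- A matroid is connected if its ground set is nonempty and it is not the direct sum of
two matroids on nonempty disjoint ground sets. -/
def Conn (M : Matroid α) : Prop :=
  M.E.Nonempty ∧ ¬ ∃ (M₁ M₂ : Matroid α) (h : Disjoint M₁.E M₂.E),
    M₁.E.Nonempty ∧ M₂.E.Nonempty ∧ M = Matroid.disjointSum M₁ M₂ h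

/-- A flat of `M`: a subset `F` of the ground set such that any superset
`B` with `F ⊆ B ⊆ M.E` of the same rank equals `F`. -/
def IsFlat (M : Matroid α) (F : Set α) : Prop :=
  F ⊆ M.E ∧ ∀ B : Set α, F ⊆ B → B ⊆ M.E → rk M B = rk M F → B = F

/-- A matroid is simple if every subset of the ground set with at most two elements
is independent. -/
def IsSimple (M : Matroid α) : Prop :=
  ∀ X ⊆ M.E, X.ncard ≤ 2 → M.Indep X

/-- A facet-defining flat of rank 2: a flat `F` of rank 2 such that
both the restriction `M ↾ F` and the contraction `M / F` are connected. -/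
def FacetFlat2 (M : Matroid α) (F : Set α) : Prop :=
  IsFlat M F ∧ rk M F = 2 ∧ Conn (M ↾ F) ∧ Conn (contract M F)

/-- `M` is 2-decomposable by the hyperplane `(A, a)_=`. -/
def TwoDecomposableBy (M : Matroid α) (A : Set α) (a : ℕ) : Prop :=
  (∃ N₁ : Matroid α, N₁.E = M.E ∧
      ∀ B : Set α, N₁.IsBase B ↔ M.IsBase B ∧ (B ∩ A).ncard ≤ a) ∧
  (∃ N₂ : Matroid α, N₂.E = M.E ∧
      ∀ B : Set α, N₂.IsBase B ↔ M.IsBase B ∧ a ≤ (B ∩ A).ncard) ∧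
  (∃ B : Set α, M.IsBase B ∧ a < (B ∩ A).ncard) ∧
  (∃ B : Set α, M.IsBase B ∧ (B ∩ A).ncard < a)

/-- A 3-partition in `M`: a partition of the ground set into three parts, each of size
at least two, such that no facet-defining flat of rank 2 meets all three parts, and the
union of any two parts has rank 3. -/
def ThreePartition (M : Matroid α) (A₁ A₂ A₃ : Set α) : Prop :=
  A₁ ∪ A₂ ∪ A₃ = M.E ∧
  Disjoint A₁ A₂ ∧ Disjoint A₂ A₃ ∧ Disjoint A₁ A₃ ∧
  2 ≤ A₁.ncard ∧ 2 ≤ A₂.ncard ∧ 2 ≤ A₃.ncard ∧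
  (¬ ∃ F : Set α, FacetFlat2 M F ∧
      (F ∩ A₁).Nonempty ∧ (F ∩ A₂).Nonempty ∧ (F ∩ A₃).Nonempty) ∧
  rk M (A₁ ∪ A₂) = 3 ∧ rk M (A₂ ∪ A₃) = 3 ∧ rk M (A₃ ∪ A₁) = 3

/-- The adjacency relation of the graph `g(A, B)` (with respect to the matroid `M`):
the vertex set is `B`, and distinct `x, y ∈ B` are adjacent iff some facet-defining flat
of rank 2 of `M` contains both `x` and `y` and meets `A`. -/
def gAdj (M : Matroid α) (A B : Set α) (x y : α) : Prop :=
  x ∈ B ∧ y ∈ B ∧ x ≠ y ∧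
    ∃ F : Set α, FacetFlat2 M F ∧ x ∈ F ∧ y ∈ F ∧ (F ∩ A).Nonempty

/-- `C` is the vertex set of a connected component of the graph `g(S, V)`. -/
def IsGComponent (M : Matroid α) (S V C : Set α) : Prop :=
  ∃ x ∈ V, C = {y | y ∈ V ∧ Relation.ReflTransGen (gAdj M S V) x y}

section Aux

variable {M : Matroid α} {A X Y I : Set α} {a x y : α} {n : ℕ}

lemma rk_bddAbove (hfin : M.E.Finite) (X : Set α) :
    BddAbove {n : ℕ | ∃ I, M.Indep I ∧ I ⊆ X ∧ I.ncard = n} :=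
  ⟨M.E.ncard, fun _ ⟨_, hI, _, hc⟩ => hc ▸ ncard_le_ncard hI.subset_ground hfin⟩

lemma rk_set_nonempty (M : Matroid α) (X : Set α) :
    {n : ℕ | ∃ I, M.Indep I ∧ I ⊆ X ∧ I.ncard = n}.Nonempty :=
  ⟨0, ∅, M.empty_indep, empty_subset _, ncard_empty _⟩

lemma le_rk (hfin : M.E.Finite) (hI : M.Indep I) (hIX : I ⊆ X) : I.ncard ≤ rk M X :=
  le_csSup (rk_bddAbove hfin X) ⟨I, hI, hIX, rfl⟩

lemma exists_rk (hfin : M.E.Finite) (X : Set α) :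
    ∃ I, M.Indep I ∧ I ⊆ X ∧ I.ncard = rk M X :=
  Nat.sSup_mem (rk_set_nonempty M X) (rk_bddAbove hfin X)

lemma rk_le (h : ∀ I, M.Indep I → I ⊆ X → I.ncard ≤ n) : rk M X ≤ n :=
  csSup_le (rk_set_nonempty M X) (fun _ ⟨I, h1, h2, h3⟩ => h3 ▸ h I h1 h2)

lemma rk_mono (hfin : M.E.Finite) (hXY : X ⊆ Y) : rk M X ≤ rk M Y := by
  obtain ⟨I, hI, hIX, hc⟩ := exists_rk hfin X
  exact hc ▸ le_rk hfin hI (hIX.trans hXY)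

lemma ncard_le_one_of_subsingleton (h : X.Subsingleton) : X.ncard ≤ 1 := by
  rcases h.eq_empty_or_singleton with rfl | ⟨a, rfl⟩ <;> simp

lemma ncard_triple {b u v : α} (hbu : b ≠ u) (hbv : b ≠ v) (huv : u ≠ v) :
    ({b, u, v} : Set α).ncard = 3 := by
  rw [ncard_insert_of_notMem (by simp [hbu, hbv]) ((finite_singleton v).insert u),
    ncard_pair huv]

lemma pt_lemma (hfin : M.E.Finite) (hrA : rk M A = 1) :
    ∀ x ∈ A, ∀ y ∈ A, x ≠ y → ¬ M.Indep {x, y} := by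
  intro x hx y hy hxy h
  have := le_rk hfin h (pair_subset hx hy)
  rw [ncard_pair hxy, hrA] at this
  omega

lemma exists_sing (hfin : M.E.Finite) (hrA : rk M A = 1) : ∃ a ∈ A, M.Indep {a} := by
  obtain ⟨I, hI, hIA, hc⟩ := exists_rk hfin A
  rw [hrA] at hc
  obtain ⟨a, rfl⟩ := ncard_eq_one.1 hc
  exact ⟨a, singleton_subset_iff.1 hIA, hI⟩

lemma indep3 (hfin : M.E.Finite) (hrank : rk M M.E = 3) (hI : M.Indep I) : I.ncard ≤ 3 :=
  hrank ▸ le_rk hfin hI hI.subset_ground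

lemma loopless (hfin : M.E.Finite) (hconn : Conn M) (hrank : rk M M.E = 3)
    (hx : x ∈ M.E) : M.Indep {x} := by
  by_contra h
  obtain ⟨K, hK, hKE, hKc⟩ := exists_rk hfin M.E
  rw [hrank] at hKc
  have hxK : x ∉ K := fun hxK => h (hK.subset (singleton_subset_iff.2 hxK))
  obtain ⟨y, hyK⟩ : K.Nonempty := nonempty_of_ncard_ne_zero (by omega)
  refine hconn.2 ⟨M ↾ {x}, M ↾ (M.E \ {x}), (by simp only [restrict_ground_eq]; exact disjoint_sdiff_right), ⟨x, rfl⟩,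
    ⟨y, hKE hyK, fun h' => hxK (h' ▸ hyK)⟩, ?_⟩
  refine ext_indep (by
    rw [disjointSum_ground_eq]; simp only [restrict_ground_eq]
    exact (union_diff_cancel (singleton_subset_iff.2 hx)).symm) fun ⦃J⦄ hJE => ?_
  rw [disjointSum_indep_iff]
  simp only [restrict_indep_iff, restrict_ground_eq]
  constructor
  · intro hJ
    have hxJ : x ∉ J := fun hxJ => h (hJ.subset (singleton_subset_iff.2 hxJ))
    rw [inter_singleton_eq_empty.2 hxJ]
    have hJsub : J ⊆ M.E \ {x} := subset_diff_singleton hJE hxJ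
    rw [inter_eq_self_of_subset_left hJsub]
    exact ⟨⟨M.empty_indep, empty_subset _⟩, ⟨hJ, hJsub⟩,
      (union_diff_cancel (singleton_subset_iff.2 hx)).symm ▸ hJE⟩
  · rintro ⟨⟨h1, -⟩, ⟨h2, -⟩, -⟩
    have hxJ : x ∉ J := fun hxJ => h (h1.subset (singleton_subset_iff.2 ⟨hxJ, rfl⟩))
    rwa [inter_eq_self_of_subset_left (subset_diff_singleton hJE hxJ)] at h2

lemma ex_pair (hfin : M.E.Finite) (hflat : IsFlat M A) (hrA : rk M A = 1)
    (hx : x ∈ M.E \ A) : ∃ b ∈ A, M.Indep {b, x} := by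
  by_contra h'
  push_neg at h'
  have hpt := pt_lemma hfin hrA
  obtain ⟨a, haA, hai⟩ := exists_sing hfin hrA
  have h1 : rk M (A ∪ {x}) ≤ 1 := by
    refine rk_le fun I hI hIs => ncard_le_one_of_subsingleton fun u hu v hv => ?_
    by_contra huv
    have hpair : M.Indep {u, v} := hI.subset (pair_subset hu hv)
    rcases hIs hu with hu' | hu' <;> rcases hIs hv with hv' | hv'
    · exact hpt u hu' v hv' huv hpair
    · exact h' u hu' (by rwa [mem_singleton_iff.1 hv'] at hpair)
    · exact h' v hv' (by rwa [mem_singleton_iff.1 hu', pair_comm] at hpair)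
    · exact huv (hu'.trans hv'.symm)
  have h2 : 1 ≤ rk M (A ∪ {x}) := by
    have h2' : ({a} : Set α).ncard ≤ rk M (A ∪ {x}) :=
      le_rk hfin hai (singleton_subset_iff.2 (mem_union_left _ haA))
    simpa using h2'
  have := hflat.2 (A ∪ {x}) subset_union_left
    (union_subset hflat.1 (singleton_subset_iff.2 hx.1)) (by omega)
  exact hx.2 (this ▸ (mem_union_right _ rfl : x ∈ A ∪ {x}))

lemma contract_eq' (M : Matroid α) (C : Set α) : contract M C = (M✶ ↾ (M.E \ C))✶ := rfl

lemma contract_ground' (M : Matroid α) (C : Set α) : (contract M C).E = M.E \ C := rfl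

lemma basisA (hAE : A ⊆ M.E) (hpt : ∀ x ∈ A, ∀ y ∈ A, x ≠ y → ¬M.Indep {x, y})
    {b : α} (hb : b ∈ A) (hbi : M.Indep {b}) : M.IsBasis {b} A := by
  rw [isBasis_iff hAE]
  refine ⟨hbi, singleton_subset_iff.2 hb, fun J hJ hbJ hJA => ?_⟩
  refine hbJ.antisymm fun c hc => ?_
  by_contra hcb
  exact hpt b hb c (hJA hc) (fun h => hcb (h ▸ rfl))
    (hJ.subset (pair_subset (hbJ rfl) hc))

lemma contract_indep_iff' (hAE : A ⊆ M.E)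
    (hpt : ∀ x ∈ A, ∀ y ∈ A, x ≠ y → ¬M.Indep {x, y})
    (hex : ∃ a ∈ A, M.Indep {a}) :
    (contract M A).Indep I ↔ I ⊆ M.E \ A ∧ ∃ b ∈ A, M.Indep (insert b I) := by
  obtain ⟨a₀, ha₀, ha₀i⟩ := hex
  constructor
  · intro hI
    rw [contract_eq', dual_indep_iff_exists'] at hI
    obtain ⟨hIsub, D, hD, hdisj⟩ := hI
    have hIE : I ⊆ M.E \ A := by simpa using hIsub
    have hDb : M✶.IsBasis D (M.E \ A) := by
      rw [isBase_restrict_iff'] at hD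
      exact (isBasis'_iff_isBasis (by rw [dual_ground]; exact diff_subset)).1 hD
    obtain ⟨Bs, hBs, hDBs⟩ := hDb.indep.exists_isBase_superset
    have hcap : Bs ∩ (M.E \ A) = D :=
      (hDb.eq_of_subset_indep (hBs.indep.subset inter_subset_left)
        (subset_inter hDBs hDb.subset) inter_subset_right).symm
    have hBsE : Bs ⊆ M.E := hBs.subset_ground
    have hMB : M.IsBase (M.E \ Bs) := hBs.compl_isBase_of_dual
    have hbb : M.IsBasis ((M.E \ Bs) ∩ A) A := by
      rw [hMB.inter_isBasis_iff_compl_inter_isBasis_dual hAE, diff_diff_cancel_left hBsE, hcap]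
      exact hDb
    have henc : ((M.E \ Bs) ∩ A).encard = 1 := by
      rw [hbb.encard_eq_encard (basisA hAE hpt ha₀ ha₀i), encard_singleton]
    obtain ⟨b, hb⟩ := encard_eq_one.1 henc
    have hbmem : b ∈ (M.E \ Bs) ∩ A := hb ▸ rfl
    have hIBs : I ⊆ M.E \ Bs := by
      intro z hz
      refine ⟨(hIE hz).1, fun hzBs => ?_⟩
      exact hdisj.ne_of_mem hz (hcap ▸ (⟨hzBs, hIE hz⟩ : z ∈ Bs ∩ (M.E \ A))) rfl
    exact ⟨hIE, b, hbmem.2, hMB.indep.subset (insert_subset hbmem.1 hIBs)⟩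
  · rintro ⟨hIE, b, hbA, hins⟩
    obtain ⟨B, hB, hsub⟩ := hins.exists_isBase_superset
    have hbB : b ∈ B := hsub (mem_insert _ _)
    have hBA : B ∩ A = {b} := by
      apply subset_antisymm
      · rintro c ⟨hcB, hcA⟩
        by_contra hcb
        exact hpt b hbA c hcA (fun h => hcb (h ▸ rfl))
          (hB.indep.subset (pair_subset hbB hcB))
      · exact singleton_subset_iff.2 ⟨hbB, hbA⟩
    have hbb : M.IsBasis (B ∩ A) A := by
      rw [hBA]
      exact basisA hAE hpt hbA (hB.indep.subset (singleton_subset_iff.2 hbB))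
    have hdual := hB.compl_inter_isBasis_of_inter_isBasis hbb
    rw [contract_eq', dual_indep_iff_exists']
    refine ⟨by simpa using hIE, (M.E \ B) ∩ (M.E \ A), ?_, ?_⟩
    · rw [isBase_restrict_iff']
      exact (isBasis'_iff_isBasis (by rw [dual_ground]; exact diff_subset)).2 hdual
    · exact disjoint_left.2 fun z hzI hz => hz.1.2 (hsub (mem_insert_of_mem _ hzI))

end Aux

section Aux2

variable {M : Matroid α} {A X Y I S : Set α} {a x y : α} {n : ℕ}

/-- Every independent set of the contraction `M/A` has at most 2 elements. -/
lemma contract_indep_ncard_le (hfin : M.E.Finite) (hrank : rk M M.E = 3)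
    (hAE : A ⊆ M.E) (hpt : ∀ x ∈ A, ∀ y ∈ A, x ≠ y → ¬M.Indep {x, y})
    (hex : ∃ a ∈ A, M.Indep {a}) (hI : (contract M A).Indep S) : S.ncard ≤ 2 := by
  obtain ⟨hSE, b, hbA, hins⟩ := (contract_indep_iff' hAE hpt hex).1 hI
  have hSfin : S.Finite := hfin.subset (hSE.trans diff_subset)
  have hbS : b ∉ S := fun hbS => (hSE hbS).2 hbA
  have := indep3 hfin hrank hins
  rw [ncard_insert_of_notMem hbS hSfin] at this
  omega

lemma contract_loopless (hfin : M.E.Finite) (hflat : IsFlat M A) (hrA : rk M A = 1)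
    (hx : x ∈ M.E \ A) : (contract M A).Indep {x} := by
  obtain ⟨b, hbA, hb⟩ := ex_pair hfin hflat hrA hx
  exact (contract_indep_iff' hflat.1 (pt_lemma hfin hrA) (exists_sing hfin hrA)).2
    ⟨singleton_subset_iff.2 hx, b, hbA, hb⟩

/-- Part 1 : the restriction to a rank-one flat is always connected. -/
lemma conn_restrict_flat (hfin : M.E.Finite) (hconn : Conn M) (hrank : rk M M.E = 3)
    (hflat : IsFlat M A) (hrA : rk M A = 1) : Conn (M ↾ A) := by
  have hpt := pt_lemma hfin hrA
  obtain ⟨a, haA, -⟩ := exists_sing hfin hrA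
  refine ⟨⟨a, haA⟩, ?_⟩
  rintro ⟨M₁, M₂, hdisj, ⟨x, hx⟩, ⟨y, hy⟩, heq⟩
  have hgr : A = M₁.E ∪ M₂.E := by
    have := congrArg Matroid.E heq
    rwa [restrict_ground_eq, disjointSum_ground_eq] at this
  have hxA : x ∈ A := hgr ▸ mem_union_left _ hx
  have hyA : y ∈ A := hgr ▸ mem_union_right _ hy
  have hxy : x ≠ y := fun h => hdisj.ne_of_mem hx hy h
  have hyM1 : y ∉ M₁.E := fun h => hxy.elim (by exact absurd (hdisj.ne_of_mem h hy rfl) (by simp))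
  have hxM2 : x ∉ M₂.E := fun h => absurd (hdisj.ne_of_mem hx h rfl) (by simp)
  -- singletons are independent in the parts
  have hxi : (Matroid.disjointSum M₁ M₂ hdisj).Indep {x} := by
    rw [← heq, restrict_indep_iff]
    exact ⟨loopless hfin hconn hrank (hflat.1 hxA), singleton_subset_iff.2 hxA⟩
  have hyi : (Matroid.disjointSum M₁ M₂ hdisj).Indep {y} := by
    rw [← heq, restrict_indep_iff]
    exact ⟨loopless hfin hconn hrank (hflat.1 hyA), singleton_subset_iff.2 hyA⟩
  rw [disjointSum_indep_iff] at hxi hyi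
  have hx1 : M₁.Indep {x} := by
    have h' := hxi.1
    rwa [inter_eq_self_of_subset_left (singleton_subset_iff.2 hx)] at h'
  have hy2 : M₂.Indep {y} := by
    have h' := hyi.2.1
    rwa [inter_eq_self_of_subset_left (singleton_subset_iff.2 hy)] at h'
  -- the pair is independent in the sum
  have hpairi : (Matroid.disjointSum M₁ M₂ hdisj).Indep {x, y} := by
    rw [disjointSum_indep_iff]
    refine ⟨?_, ?_, ?_⟩
    · have : ({x, y} : Set α) ∩ M₁.E = {x} := by
        apply subset_antisymm
        · rintro z ⟨hz1, hz2⟩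
          rcases hz1 with rfl | rfl
          · rfl
          · exact absurd hz2 hyM1
        · exact singleton_subset_iff.2 ⟨mem_insert _ _, hx⟩
      rwa [this]
    · have : ({x, y} : Set α) ∩ M₂.E = {y} := by
        apply subset_antisymm
        · rintro z ⟨hz1, hz2⟩
          rcases hz1 with rfl | rfl
          · exact absurd hz2 hxM2
          · rfl
        · exact singleton_subset_iff.2 ⟨mem_insert_of_mem _ rfl, hy⟩
      rwa [this]
    · exact pair_subset (mem_union_left _ hx) (mem_union_right _ hy)
  rw [← heq, restrict_indep_iff] at hpairi
  exact hpt x hxA y hyA hxy hpairi.1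

end Aux2

section Aux3

variable {M : Matroid α} {A X Y I S : Set α} {a x y : α} {n : ℕ}

/-- Part (a): a pair of rank-2 flats meeting in `A` and covering `E` disconnects `M/A`. -/
lemma contract_decomp_of_pair (hfin : M.E.Finite) (hflat : IsFlat M A) (hrA : rk M A = 1)
    {F₁ F₂ : Set α} (hF₁ : IsFlat M F₁) (hF₂ : IsFlat M F₂)
    (hr1 : rk M F₁ = 2) (hr2 : rk M F₂ = 2)
    (hcap : A = F₁ ∩ F₂) (hcup : F₁ ∪ F₂ = M.E) :
    ∃ (M₁ M₂ : Matroid α) (h : Disjoint M₁.E M₂.E), M₁.E.Nonempty ∧ M₂.E.Nonempty ∧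
      contract M A = Matroid.disjointSum M₁ M₂ h := by
  have hAE : A ⊆ M.E := hflat.1
  have hpt := pt_lemma hfin hrA
  have hex := exists_sing hfin hrA
  have cIff : ∀ I : Set α, (contract M A).Indep I ↔
      I ⊆ M.E \ A ∧ ∃ b ∈ A, M.Indep (insert b I) :=
    fun _ => contract_indep_iff' hAE hpt hex
  have hA1 : A ⊆ F₁ := hcap ▸ inter_subset_left
  have hA2 : A ⊆ F₂ := hcap ▸ inter_subset_right
  have hdisj : Disjoint (F₁ \ A) (F₂ \ A) :=
    disjoint_left.2 fun z hz1 hz2 => hz1.2 (hcap ▸ (⟨hz1.1, hz2.1⟩ : z ∈ F₁ ∩ F₂))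
  have hne1 : (F₁ \ A).Nonempty := diff_nonempty.2 fun hsub => by
    have := rk_mono hfin hsub; omega
  have hne2 : (F₂ \ A).Nonempty := diff_nonempty.2 fun hsub => by
    have := rk_mono hfin hsub; omega
  have hgr : (contract M A).E = (F₁ \ A) ∪ (F₂ \ A) := by
    rw [contract_ground', ← hcup, union_diff_distrib]
  -- inside a rank-2 flat containing A, independent pairs of M/A collapse
  have sub1 : ∀ F : Set α, A ⊆ F → rk M F = 2 → ∀ u ∈ F \ A, ∀ v ∈ F \ A,
      (contract M A).Indep {u, v} → u = v := by
    intro F hAF hrF u hu v hv hi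
    by_contra huv
    obtain ⟨-, b, hbA, hbi⟩ := (cIff _).1 hi
    have hbu : b ≠ u := fun h => hu.2 (h ▸ hbA)
    have hbv : b ≠ v := fun h => hv.2 (h ▸ hbA)
    have hcard : (insert b {u, v} : Set α).ncard = 3 := ncard_triple hbu hbv huv
    have := le_rk hfin hbi (insert_subset (hAF hbA) (pair_subset hu.1 hv.1))
    omega
  -- cross pairs are independent in M/A
  have cross : ∀ u ∈ F₁ \ A, ∀ v ∈ F₂ \ A, (contract M A).Indep {u, v} := by
    intro u hu v hv
    have hu' : u ∈ M.E \ A := ⟨hF₁.1 hu.1, hu.2⟩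
    have hv' : v ∈ M.E \ A := ⟨hF₂.1 hv.1, hv.2⟩
    obtain ⟨b, hbA, hbu⟩ := ex_pair hfin hflat hrA hu'
    have hbu' : b ≠ u := fun h => hu.2 (h ▸ hbA)
    have hvF1 : v ∉ F₁ := fun h => hv.2 (hcap ▸ (⟨h, hv.1⟩ : v ∈ F₁ ∩ F₂))
    have hr3 : 3 ≤ rk M (F₁ ∪ {v}) := by
      have hge : 2 ≤ rk M (F₁ ∪ {v}) := hr1 ▸ rk_mono hfin subset_union_left
      rcases eq_or_lt_of_le hge with heq2 | hlt
      · exfalso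
        have := hF₁.2 (F₁ ∪ {v}) subset_union_left
          (union_subset hF₁.1 (singleton_subset_iff.2 hv'.1)) (by omega)
        exact hvF1 (this ▸ (mem_union_right _ rfl : v ∈ F₁ ∪ {v}))
      · omega
    obtain ⟨K, hK, hKsub, hKc⟩ := exists_rk hfin (F₁ ∪ {v})
    obtain ⟨t, htK, htc⟩ := Set.exists_subset_card_eq (s := K) (n := 3) (by omega)
    have ht : M.Indep t := hK.subset htK
    have htfin : t.Finite := hfin.subset ht.subset_ground
    have htE : t.encard = 3 := by rw [← htfin.cast_ncard_eq, htc]; rfl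
    obtain ⟨z, hz, hzi⟩ := hbu.augment ht (by
      rw [encard_pair hbu', htE]; norm_num)
    have hzt : z ∈ t := hz.1
    have hznb : z ≠ b := fun h => hz.2 (h ▸ mem_insert _ _)
    have hznu : z ≠ u := fun h => hz.2 (h ▸ mem_insert_of_mem _ rfl)
    rcases htK.trans hKsub hzt with hzF1 | hzv
    · exfalso
      have hcard : (insert z {b, u} : Set α).ncard = 3 := ncard_triple hznb hznu hbu'
      have := le_rk hfin hzi (insert_subset hzF1 (pair_subset (hA1 hbA) hu.1))
      omega
    · rw [mem_singleton_iff] at hzv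
      subst hzv
      have hset : insert z ({b, u} : Set α) = insert b ({u, z} : Set α) := by
        ext w; simp only [mem_insert_iff, mem_singleton_iff]; tauto
      exact (cIff _).2 ⟨pair_subset hu' hv', b, hbA, hset ▸ hzi⟩
  refine ⟨(contract M A) ↾ (F₁ \ A), (contract M A) ↾ (F₂ \ A), by simpa using hdisj,
    by simpa using hne1, by simpa using hne2, ?_⟩
  refine ext_indep (by
    rw [disjointSum_ground_eq]; simp only [restrict_ground_eq]; exact hgr) fun ⦃J⦄ hJE => ?_
  rw [disjointSum_indep_iff]
  simp only [restrict_indep_iff, restrict_ground_eq]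
  rw [hgr] at hJE
  constructor
  · intro hJ
    exact ⟨⟨hJ.subset inter_subset_left, inter_subset_right⟩,
      ⟨hJ.subset inter_subset_left, inter_subset_right⟩, hJE⟩
  · rintro ⟨⟨h1, -⟩, ⟨h2, -⟩, -⟩
    have hJeq : (J ∩ (F₁ \ A)) ∪ (J ∩ (F₂ \ A)) = J := by
      rw [← inter_union_distrib_left]; exact inter_eq_self_of_subset_left hJE
    have hsub1 : (J ∩ (F₁ \ A)).Subsingleton := fun u hu v hv =>
      sub1 F₁ hA1 hr1 u hu.2 v hv.2 (h1.subset (pair_subset hu hv))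
    have hsub2 : (J ∩ (F₂ \ A)).Subsingleton := fun u hu v hv =>
      sub1 F₂ hA2 hr2 u hu.2 v hv.2 (h2.subset (pair_subset hu hv))
    rcases hsub1.eq_empty_or_singleton with he1 | ⟨u, hu⟩ <;>
      rcases hsub2.eq_empty_or_singleton with he2 | ⟨v, hv⟩
    · rw [← hJeq, he1, he2, union_empty]; exact (contract M A).empty_indep
    · rw [← hJeq, he1, hv, empty_union]; exact hv ▸ h2
    · rw [← hJeq, hu, he2, union_empty]; exact hu ▸ h1
    · rw [← hJeq, hu, hv, singleton_union]
      have hu' : u ∈ J ∩ (F₁ \ A) := by rw [hu]; exact mem_singleton u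
      have hv' : v ∈ J ∩ (F₂ \ A) := by rw [hv]; exact mem_singleton v
      exact cross u hu'.2 v hv'.2

end Aux3

section Aux4

variable {M : Matroid α} {A X Y I S : Set α} {a x y : α} {n : ℕ}

/-- If the ground set of `M/A` is covered by `E₁ ∪ E₂` where no pair inside `E₁` is
independent in `M/A` but all cross pairs are, then `A ∪ E₁` is a rank-2 flat. -/
lemma flat_piece (hfin : M.E.Finite) (hflat : IsFlat M A) (hrA : rk M A = 1)
    {E₁ E₂ : Set α} (hE1 : E₁ ⊆ M.E \ A) (hE2 : E₂ ⊆ M.E \ A)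
    (hcover : M.E \ A = E₁ ∪ E₂) (hne1 : E₁.Nonempty)
    (no2 : ∀ u v, u ∈ E₁ → v ∈ E₁ → u ≠ v → ¬ (contract M A).Indep {u, v})
    (cross : ∀ u ∈ E₁, ∀ v ∈ E₂, (contract M A).Indep {u, v}) :
    IsFlat M (A ∪ E₁) ∧ rk M (A ∪ E₁) = 2 := by
  have hAE : A ⊆ M.E := hflat.1
  have hpt := pt_lemma hfin hrA
  have hex := exists_sing hfin hrA
  have cIff : ∀ I : Set α, (contract M A).Indep I ↔
      I ⊆ M.E \ A ∧ ∃ b ∈ A, M.Indep (insert b I) :=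
    fun _ => contract_indep_iff' hAE hpt hex
  obtain ⟨x₁, hx₁⟩ := hne1
  have hx₁' : x₁ ∈ M.E \ A := hE1 hx₁
  -- rank at most 2
  have hle : rk M (A ∪ E₁) ≤ 2 := by
    refine rk_le fun I hI hIs => ?_
    by_contra hc
    obtain ⟨t, htI, htc⟩ := Set.exists_subset_card_eq (show 3 ≤ I.ncard by omega)
    have ht : M.Indep t := hI.subset htI
    have htfin : t.Finite := hfin.subset ht.subset_ground
    have htsub : t ⊆ A ∪ E₁ := htI.trans hIs
    have htA : (t ∩ A).Subsingleton := by
      intro u hu v hv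
      by_contra hne
      exact hpt u hu.2 v hv.2 hne (ht.subset (pair_subset hu.1 hv.1))
    have hsplit : (t ∩ A) ∪ (t ∩ E₁) = t := by
      rw [← inter_union_distrib_left]; exact inter_eq_self_of_subset_left htsub
    have h2le : 2 ≤ (t ∩ E₁).ncard := by
      have h1 := ncard_union_le (t ∩ A) (t ∩ E₁)
      rw [hsplit, htc] at h1
      have h2 : (t ∩ A).ncard ≤ 1 := ncard_le_one_of_subsingleton htA
      omega
    obtain ⟨p, hp, q, hq, hpq⟩ := (Set.one_lt_ncard (s := t ∩ E₁)
      (htfin.subset inter_subset_left)).1 (by omega)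
    -- find a witness pair in E₁ that lifts to M/A
    obtain ⟨p', q', hp', hq', hpq', b', hb'A, hb'i⟩ :
        ∃ p' q', p' ∈ E₁ ∧ q' ∈ E₁ ∧ p' ≠ q' ∧ ∃ b' ∈ A, M.Indep (insert b' {p', q'}) := by
      rcases (t ∩ A).eq_empty_or_nonempty with hAe | ⟨w, hw⟩
      · -- t ⊆ E₁ : use augmentation from a pair {b₁, p}
        have htE1 : t ⊆ E₁ := by
          rw [← hsplit, hAe, empty_union]; exact inter_subset_right
        obtain ⟨b₁, hb₁A, hb₁p⟩ := ex_pair hfin hflat hrA (hE1 hp.2)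
        have hb₁p' : b₁ ≠ p := fun h => (hE1 hp.2).2 (h ▸ hb₁A)
        have htE : t.encard = 3 := by rw [← htfin.cast_ncard_eq, htc]; rfl
        obtain ⟨z, hz, hzi⟩ := hb₁p.augment ht (by rw [encard_pair hb₁p', htE]; norm_num)
        have hznp : z ≠ p := fun h => hz.2 (h ▸ mem_insert_of_mem _ rfl)
        have hset : insert z ({b₁, p} : Set α) = insert b₁ ({p, z} : Set α) := by
          ext w; simp only [mem_insert_iff, mem_singleton_iff]; tauto
        exact ⟨p, z, hp.2, htE1 hz.1, hznp.symm, b₁, hb₁A, hset ▸ hzi⟩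
      · -- some element of t lies in A
        have hwp : w ≠ p := fun h => (hE1 hp.2).2 (h ▸ hw.2)
        refine ⟨p, q, hp.2, hq.2, hpq, w, hw.2, ht.subset ?_⟩
        exact insert_subset hw.1 (pair_subset hp.1 hq.1)
    exact no2 p' q' hp' hq' hpq'
      ((cIff _).2 ⟨pair_subset (hE1 hp') (hE1 hq'), b', hb'A, hb'i⟩)
  -- rank at least 2
  obtain ⟨b, hbA, hbx⟩ := ex_pair hfin hflat hrA hx₁'
  have hbx₁ : b ≠ x₁ := fun h => hx₁'.2 (h ▸ hbA)
  have hge : 2 ≤ rk M (A ∪ E₁) := by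
    have := le_rk hfin hbx (pair_subset (mem_union_left _ hbA) (mem_union_right _ hx₁))
    rwa [ncard_pair hbx₁] at this
  have hrk : rk M (A ∪ E₁) = 2 := le_antisymm hle hge
  refine ⟨⟨union_subset hAE (hE1.trans diff_subset), fun B hFB hBE hrkB => ?_⟩, hrk⟩
  rw [hrk] at hrkB
  refine subset_antisymm (fun z hzB => ?_) hFB
  by_contra hzF
  have hzA : z ∉ A := fun h => hzF (mem_union_left _ h)
  have hzE1 : z ∉ E₁ := fun h => hzF (mem_union_right _ h)
  have hzE2 : z ∈ E₂ := by
    have : z ∈ M.E \ A := ⟨hBE hzB, hzA⟩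
    rw [hcover] at this
    exact this.resolve_left hzE1
  obtain ⟨-, b', hb'A, hb'i⟩ := (cIff _).1 (cross x₁ hx₁ z hzE2)
  have hb'x : b' ≠ x₁ := fun h => hx₁'.2 (h ▸ hb'A)
  have hb'z : b' ≠ z := fun h => hzA (h ▸ hb'A)
  have hxz : x₁ ≠ z := fun h => hzE1 (h ▸ hx₁)
  have hcard : (insert b' {x₁, z} : Set α).ncard = 3 := ncard_triple hb'x hb'z hxz
  have := le_rk hfin hb'i (insert_subset (hFB (mem_union_left _ hb'A))
    (pair_subset (hFB (mem_union_right _ hx₁)) hzB))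
  omega

end Aux4

section Aux5

variable {M : Matroid α} {A X Y I S : Set α} {a x y : α} {n : ℕ}

/-- Part (b): a decomposition of `M/A` yields a pair of rank-2 flats. -/
lemma pair_of_contract_decomp (hfin : M.E.Finite) (hflat : IsFlat M A) (hrA : rk M A = 1)
    (hrank : rk M M.E = 3) {M₁ M₂ : Matroid α} {hdisj : Disjoint M₁.E M₂.E}
    (hne1 : M₁.E.Nonempty) (hne2 : M₂.E.Nonempty)
    (heq : contract M A = Matroid.disjointSum M₁ M₂ hdisj) :
    ∃ F₁ F₂ : Set α, IsFlat M F₁ ∧ IsFlat M F₂ ∧ rk M F₁ = 2 ∧ rk M F₂ = 2 ∧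
      A = F₁ ∩ F₂ ∧ F₁ ∪ F₂ = M.E := by
  have hAE : A ⊆ M.E := hflat.1
  have hpt := pt_lemma hfin hrA
  have hex := exists_sing hfin hrA
  have hgr : M.E \ A = M₁.E ∪ M₂.E := by
    have := congrArg Matroid.E heq
    rwa [contract_ground', disjointSum_ground_eq] at this
  have hE1 : M₁.E ⊆ M.E \ A := hgr ▸ subset_union_left
  have hE2 : M₂.E ⊆ M.E \ A := hgr ▸ subset_union_right
  have sing1 : ∀ x ∈ M₁.E, M₁.Indep {x} := by
    intro x hx
    have h := contract_loopless hfin hflat hrA (hE1 hx)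
    rw [heq, disjointSum_indep_iff] at h
    have h' := h.1
    rwa [inter_eq_self_of_subset_left (singleton_subset_iff.2 hx)] at h'
  have sing2 : ∀ x ∈ M₂.E, M₂.Indep {x} := by
    intro x hx
    have h := contract_loopless hfin hflat hrA (hE2 hx)
    rw [heq, disjointSum_indep_iff] at h
    have h' := h.2.1
    rwa [inter_eq_self_of_subset_left (singleton_subset_iff.2 hx)] at h'
  have cross : ∀ u ∈ M₁.E, ∀ v ∈ M₂.E, (contract M A).Indep {u, v} := by
    intro u hu v hv
    have hvu1 : v ∉ M₁.E := fun h => (hdisj.ne_of_mem h hv) rfl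
    have huv2 : u ∉ M₂.E := fun h => (hdisj.ne_of_mem hu h) rfl
    rw [heq, disjointSum_indep_iff]
    refine ⟨?_, ?_, pair_subset (mem_union_left _ hu) (mem_union_right _ hv)⟩
    · have h1 : ({u, v} : Set α) ∩ M₁.E = {u} := by
        apply subset_antisymm
        · rintro w ⟨hw1, hw2⟩
          rcases hw1 with rfl | rfl
          · exact mem_singleton _
          · exact absurd hw2 hvu1
        · exact singleton_subset_iff.2 ⟨mem_insert _ _, hu⟩
      rw [h1]; exact sing1 u hu
    · have h2 : ({u, v} : Set α) ∩ M₂.E = {v} := by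
        apply subset_antisymm
        · rintro w ⟨hw1, hw2⟩
          rcases hw1 with rfl | rfl
          · exact absurd hw2 huv2
          · exact mem_singleton _
        · exact singleton_subset_iff.2 ⟨mem_insert_of_mem _ rfl, hv⟩
      rw [h2]; exact sing2 v hv
  have no2 : ∀ u v, u ∈ M₁.E → v ∈ M₁.E → u ≠ v → ¬ (contract M A).Indep {u, v} := by
    intro u v hu hv huv hi
    rw [heq, disjointSum_indep_iff] at hi
    have h1 := hi.1
    rw [inter_eq_self_of_subset_left (pair_subset hu hv)] at h1
    obtain ⟨x₂, hx₂⟩ := hne2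
    have hx₂1 : x₂ ∉ M₁.E := fun h => (hdisj.ne_of_mem h hx₂) rfl
    have hux₂ : u ≠ x₂ := fun h => hx₂1 (h ▸ hu)
    have hvx₂ : v ≠ x₂ := fun h => hx₂1 (h ▸ hv)
    have hbig : (contract M A).Indep {u, v, x₂} := by
      rw [heq, disjointSum_indep_iff]
      have hu2 : u ∉ M₂.E := fun h => (hdisj.ne_of_mem hu h) rfl
      have hv2 : v ∉ M₂.E := fun h => (hdisj.ne_of_mem hv h) rfl
      refine ⟨?_, ?_, ?_⟩
      · have h3 : ({u, v, x₂} : Set α) ∩ M₁.E = {u, v} := by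
          apply subset_antisymm
          · rintro w ⟨hw1, hw2⟩
            rcases hw1 with rfl | rfl | rfl
            · exact mem_insert _ _
            · exact mem_insert_of_mem _ rfl
            · exact absurd hw2 hx₂1
          · exact pair_subset ⟨mem_insert _ _, hu⟩
              ⟨mem_insert_of_mem _ (mem_insert _ _), hv⟩
        rw [h3]; exact h1
      · have h4 : ({u, v, x₂} : Set α) ∩ M₂.E = {x₂} := by
          apply subset_antisymm
          · rintro w ⟨hw1, hw2⟩
            rcases hw1 with rfl | rfl | rfl
            · exact absurd hw2 hu2
            · exact absurd hw2 hv2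
            · exact mem_singleton _
          · exact singleton_subset_iff.2
              ⟨mem_insert_of_mem _ (mem_insert_of_mem _ rfl), hx₂⟩
        rw [h4]; exact sing2 x₂ hx₂
      · exact insert_subset (mem_union_left _ hu) (insert_subset (mem_union_left _ hv)
          (singleton_subset_iff.2 (mem_union_right _ hx₂)))
    have hb := contract_indep_ncard_le hfin hrank hAE hpt hex hbig
    have hc : ({u, v, x₂} : Set α).ncard = 3 := ncard_triple huv hux₂ hvx₂
    omega
  have no2' : ∀ u v, u ∈ M₂.E → v ∈ M₂.E → u ≠ v → ¬ (contract M A).Indep {u, v} := by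
    intro u v hu hv huv hi
    rw [heq, disjointSum_indep_iff] at hi
    have h1 := hi.2.1
    rw [inter_eq_self_of_subset_left (pair_subset hu hv)] at h1
    obtain ⟨x₁, hx₁⟩ := hne1
    have hx₁2 : x₁ ∉ M₂.E := fun h => (hdisj.ne_of_mem hx₁ h) rfl
    have hux₁ : u ≠ x₁ := fun h => hx₁2 (h ▸ hu)
    have hvx₁ : v ≠ x₁ := fun h => hx₁2 (h ▸ hv)
    have hbig : (contract M A).Indep {u, v, x₁} := by
      rw [heq, disjointSum_indep_iff]
      have hu1 : u ∉ M₁.E := fun h => (hdisj.ne_of_mem h hu) rfl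
      have hv1 : v ∉ M₁.E := fun h => (hdisj.ne_of_mem h hv) rfl
      refine ⟨?_, ?_, ?_⟩
      · have h3 : ({u, v, x₁} : Set α) ∩ M₁.E = {x₁} := by
          apply subset_antisymm
          · rintro w ⟨hw1, hw2⟩
            rcases hw1 with rfl | rfl | rfl
            · exact absurd hw2 hu1
            · exact absurd hw2 hv1
            · exact mem_singleton _
          · exact singleton_subset_iff.2
              ⟨mem_insert_of_mem _ (mem_insert_of_mem _ rfl), hx₁⟩
        rw [h3]; exact sing1 x₁ hx₁
      · have h4 : ({u, v, x₁} : Set α) ∩ M₂.E = {u, v} := by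
          apply subset_antisymm
          · rintro w ⟨hw1, hw2⟩
            rcases hw1 with rfl | rfl | rfl
            · exact mem_insert _ _
            · exact mem_insert_of_mem _ rfl
            · exact absurd hw2 hx₁2
          · exact pair_subset ⟨mem_insert _ _, hu⟩
              ⟨mem_insert_of_mem _ (mem_insert _ _), hv⟩
        rw [h4]; exact h1
      · exact insert_subset (mem_union_right _ hu) (insert_subset (mem_union_right _ hv)
          (singleton_subset_iff.2 (mem_union_left _ hx₁)))
    have hb := contract_indep_ncard_le hfin hrank hAE hpt hex hbig
    have hc : ({u, v, x₁} : Set α).ncard = 3 := ncard_triple huv hux₁ hvx₁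
    omega
  obtain ⟨hflat1, hrk1⟩ := flat_piece hfin hflat hrA hE1 hE2 hgr hne1 no2 cross
  obtain ⟨hflat2, hrk2⟩ := flat_piece hfin hflat hrA hE2 hE1 (by rw [hgr, union_comm])
    hne2 no2' (fun u hu v hv => by rw [pair_comm]; exact cross v hv u hu)
  refine ⟨A ∪ M₁.E, A ∪ M₂.E, hflat1, hflat2, hrk1, hrk2, ?_, ?_⟩
  · rw [← union_inter_distrib_left, hdisj.inter_eq, union_empty]
  · rw [union_union_union_comm, union_self, ← hgr, union_diff_cancel hAE]

end Aux5

/-- For a connected matroid `M` of rank 3 and a flat `A` of rank 1, the inequality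
`(A,1)_≤` is facet-defining (i.e. `M|A` and `M/A` are both connected) iff there is no
pair of rank-2 flats `F₁, F₂` with `A = F₁ ∩ F₂` and `F₁ ∪ F₂ = E`. -/
theorem rank_one_flat_facet_iff (M : Matroid α) (hfin : M.E.Finite)
    (hconn : Conn M) (hrank : rk M M.E = 3)
    (A : Set α) (hflat : IsFlat M A) (hrA : rk M A = 1) :
    (Conn (M ↾ A) ∧ Conn (contract M A)) ↔
      ¬ ∃ F₁ F₂ : Set α, IsFlat M F₁ ∧ IsFlat M F₂ ∧
        rk M F₁ = 2 ∧ rk M F₂ = 2 ∧ A = F₁ ∩ F₂ ∧ F₁ ∪ F₂ = M.E := by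
  constructor
  · rintro ⟨-, hconnN⟩ ⟨F₁, F₂, hF₁, hF₂, hr1, hr2, hcap, hcup⟩
    exact hconnN.2 (contract_decomp_of_pair hfin hflat hrA hF₁ hF₂ hr1 hr2 hcap hcup)
  · intro hno
    refine ⟨conn_restrict_flat hfin hconn hrank hflat hrA, ?_, ?_⟩
    · rw [contract_ground']
      obtain ⟨K, hK, hKE, hKc⟩ := exists_rk hfin M.E
      rw [hrank] at hKc
      have hns : ¬ K ⊆ A := fun h => by
        have := le_rk hfin hK h; rw [hrA] at this; omega
      obtain ⟨x, hxK, hxA⟩ := not_subset.1 hns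
      exact ⟨x, hKE hxK, hxA⟩
    · rintro ⟨M₁, M₂, hdisj, hne1, hne2, heq⟩
      exact hno (pair_of_contract_decomp hfin hflat hrA hrank hne1 hne2 heq)

end PaperWMO
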